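/- For k ∈ ℝ, let u = cos k, ξ = (2u + √(4u² + 1))^{1/3} and s = ξ − 1/ξ. Then: (1) ξ³ − 1/ξ³ = 4u; (2) s is an increasing function of u on [−1,1] with s = −1 at u = −1 and s = 1 at u = 1, so s ∈ [−1,1]; (3) setting λ₀ = (2cos k)/3, λ₁ = (2cos k)/3 + (ξ − 1/ξ)/3, and λ₂ = (2cos k)/3 + (1/6)((−1 + i√3)ξ + (1 + i√3)/ξ), one has λ₀ = s(s²+3)/6, λ₁ = s(s²+5)/6, and λ₂ = s(s²+2)/6 + i(√3/6)√(s²+4); (4) consequently |λ₀| ≤ 2/3 and |λ₂| ≤ √(2/3). -/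

import Mathlib

/-- `ξ(u) = (2u + √(4u² + 1))^{1/3}`. -/
noncomputable def xiFun (u : ℝ) : ℝ := (2 * u + Real.sqrt (4 * u ^ 2 + 1)) ^ ((1 : ℝ) / 3)

/-- `s(u) = ξ(u) - 1/ξ(u)`. -/
noncomputable def sFun (u : ℝ) : ℝ := xiFun u - 1 / xiFun u

lemma base_pos (u : ℝ) : 0 < 2 * u + Real.sqrt (4 * u ^ 2 + 1) := by
  have h : |2 * u| < Real.sqrt (4 * u ^ 2 + 1) := by
    rw [← Real.sqrt_sq_eq_abs]
    exact Real.sqrt_lt_sqrt (sq_nonneg _) (by nlinarith)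
  cases' abs_lt.mp h with h1 h2
  linarith

lemma xi_pos (u : ℝ) : 0 < xiFun u := Real.rpow_pos_of_pos (base_pos u) _

lemma xi_cube (u : ℝ) : xiFun u ^ 3 = 2 * u + Real.sqrt (4 * u ^ 2 + 1) := by
  rw [xiFun, ← Real.rpow_natCast (_ ^ _) 3, ← Real.rpow_mul (base_pos u).le]
  norm_num

lemma xi_key (u : ℝ) : xiFun u ^ 3 - 1 / xiFun u ^ 3 = 4 * u := by
  have hr : Real.sqrt (4 * u ^ 2 + 1) ^ 2 = 4 * u ^ 2 + 1 :=
    Real.sq_sqrt (by positivity)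
  have hx := xi_pos u
  have h3 : xiFun u ^ 3 * (Real.sqrt (4 * u ^ 2 + 1) - 2 * u) = 1 := by
    rw [xi_cube]; nlinarith
  field_simp
  linear_combination xiFun u ^ 3 * xi_cube u + h3

lemma s_key (u : ℝ) : sFun u ^ 3 + 3 * sFun u = 4 * u := by
  have hx := (xi_pos u).ne'
  have h := xi_key u
  rw [sFun]
  field_simp at h ⊢
  linear_combination h

lemma s_mono : StrictMono sFun := by
  intro a b hab
  by_contra h
  push_neg at h
  have hg : sFun b ^ 3 + 3 * sFun b ≤ sFun a ^ 3 + 3 * sFun a := by nlinarith [sq_nonneg (sFun a + sFun b), sq_nonneg (sFun a - sFun b)]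
  rw [s_key, s_key] at hg
  linarith

lemma s_val (u v : ℝ) (h : v ^ 3 + 3 * v = 4 * u) : sFun u = v := by
  have h2 := s_key u
  nlinarith [sq_nonneg (sFun u - v), sq_nonneg (sFun u + v), sq_nonneg (sFun u)]

lemma s_neg1 : sFun (-1) = -1 := s_val _ _ (by norm_num)
lemma s_one : sFun 1 = 1 := s_val _ _ (by norm_num)

lemma xi_add (u : ℝ) : xiFun u + 1 / xiFun u = Real.sqrt (sFun u ^ 2 + 4) := by
  have hx := xi_pos u
  have h : sFun u ^ 2 + 4 = (xiFun u + 1 / xiFun u) ^ 2 := by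
    rw [sFun]; field_simp; ring
  rw [h, Real.sqrt_sq (by positivity)]

/-- Example 5, reparametrization of the eigenvalues: with `u = cos k`,
`ξ = (2u + √(4u²+1))^{1/3}` and `s = ξ - 1/ξ` one has `ξ³ - 1/ξ³ = 4u`; `s` is
increasing on `[-1,1]` with `s(-1) = -1`, `s(1) = 1`, so `s ∈ [-1,1]`; the
eigenvalues satisfy `λ₀ = s(s²+3)/6`, `λ₁ = s(s²+5)/6`,
`λ₂ = s(s²+2)/6 + i(√3/6)√(s²+4)`; and consequently `|λ₀| ≤ 2/3`,
`|λ₂| ≤ √(2/3)`. -/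
theorem oqrw_example5_eigenvalues (k u : ℝ) (hu : u = Real.cos k) :
    xiFun u ^ 3 - 1 / xiFun u ^ 3 = 4 * u ∧
    StrictMonoOn sFun (Set.Icc (-1 : ℝ) 1) ∧
    sFun (-1) = -1 ∧ sFun 1 = 1 ∧ sFun u ∈ Set.Icc (-1 : ℝ) 1 ∧
    2 * Real.cos k / 3 = sFun u * (sFun u ^ 2 + 3) / 6 ∧
    2 * Real.cos k / 3 + (xiFun u - 1 / xiFun u) / 3 = sFun u * (sFun u ^ 2 + 5) / 6 ∧
    (2 * (Real.cos k : ℂ) / 3 +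
        (1 / 6 : ℂ) * ((-1 + Complex.I * (Real.sqrt 3 : ℂ)) * (xiFun u : ℂ) +
          (1 + Complex.I * (Real.sqrt 3 : ℂ)) / (xiFun u : ℂ)) =
      ((sFun u * (sFun u ^ 2 + 2) / 6 : ℝ) : ℂ) +
        Complex.I * ((Real.sqrt 3 / 6 * Real.sqrt (sFun u ^ 2 + 4) : ℝ) : ℂ)) ∧
    |2 * Real.cos k / 3| ≤ 2 / 3 ∧
    ‖2 * (Real.cos k : ℂ) / 3 +
        (1 / 6 : ℂ) * ((-1 + Complex.I * (Real.sqrt 3 : ℂ)) * (xiFun u : ℂ) +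
          (1 + Complex.I * (Real.sqrt 3 : ℂ)) / (xiFun u : ℂ))‖ ≤ Real.sqrt (2 / 3) := by
  have hcos : 2 * Real.cos k = 4 * u / 2 := by rw [hu]; ring
  have hsk := s_key u
  have hx := xi_pos u
  have hmem : sFun u ∈ Set.Icc (-1 : ℝ) 1 := by
    constructor
    · rw [← s_neg1]
      exact s_mono.le_iff_le.mpr (by rw [hu]; exact Real.neg_one_le_cos k)
    · rw [← s_one]
      exact s_mono.le_iff_le.mpr (by rw [hu]; exact Real.cos_le_one k)
  have hlam0 : 2 * Real.cos k / 3 = sFun u * (sFun u ^ 2 + 3) / 6 := by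
    rw [hcos]; linarith [hsk]
  -- the complex eigenvalue identity
  have hcplx : (2 * (Real.cos k : ℂ) / 3 +
        (1 / 6 : ℂ) * ((-1 + Complex.I * (Real.sqrt 3 : ℂ)) * (xiFun u : ℂ) +
          (1 + Complex.I * (Real.sqrt 3 : ℂ)) / (xiFun u : ℂ)) =
      ((sFun u * (sFun u ^ 2 + 2) / 6 : ℝ) : ℂ) +
        Complex.I * ((Real.sqrt 3 / 6 * Real.sqrt (sFun u ^ 2 + 4) : ℝ) : ℂ)) := by
    have hre : 2 * Real.cos k / 3 + (-(xiFun u) + 1 / xiFun u) / 6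
        = sFun u * (sFun u ^ 2 + 2) / 6 := by
      have hs : sFun u = xiFun u - 1 / xiFun u := rfl
      rw [hcos]
      nlinarith [hsk, hs]
    have him : Real.sqrt 3 * xiFun u / 6 + Real.sqrt 3 * (1 / xiFun u) / 6
        = Real.sqrt 3 / 6 * Real.sqrt (sFun u ^ 2 + 4) := by
      rw [← xi_add]; ring
    have hxne : (xiFun u : ℂ) ≠ 0 := by exact_mod_cast hx.ne'
    calc 2 * (Real.cos k : ℂ) / 3 +
        (1 / 6 : ℂ) * ((-1 + Complex.I * (Real.sqrt 3 : ℂ)) * (xiFun u : ℂ) +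
          (1 + Complex.I * (Real.sqrt 3 : ℂ)) / (xiFun u : ℂ))
        = ((2 * Real.cos k / 3 + (-(xiFun u) + 1 / xiFun u) / 6 : ℝ) : ℂ) +
          Complex.I * ((Real.sqrt 3 * xiFun u / 6 + Real.sqrt 3 * (1 / xiFun u) / 6 : ℝ) : ℂ) := by
          push_cast
          field_simp
          ring
      _ = _ := by rw [hre, him]
  refine ⟨xi_key u, s_mono.strictMonoOn _, s_neg1, s_one, hmem, hlam0, ?_, hcplx, ?_, ?_⟩
  · have hs : sFun u = xiFun u - 1 / xiFun u := rfl
    rw [hcos, ← hs]; linarith [hsk]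
  · rw [abs_le]
    constructor <;> nlinarith [Real.neg_one_le_cos k, Real.cos_le_one k]
  · rw [hcplx, mul_comm Complex.I, Complex.norm_add_mul_I]
    apply Real.sqrt_le_sqrt
    have hs2 : sFun u ^ 2 ≤ 1 := by
      obtain ⟨h1, h2⟩ := hmem; nlinarith
    have h3 : Real.sqrt 3 ^ 2 = 3 := Real.sq_sqrt (by norm_num)
    have h4 : Real.sqrt (sFun u ^ 2 + 4) ^ 2 = sFun u ^ 2 + 4 :=
      Real.sq_sqrt (by positivity)
    nlinarith [sq_nonneg (sFun u), sq_nonneg (sFun u ^ 2 - 1)]
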